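/- Let d ≥ 2 be an even integer. A d-small symbol Θ has no d/2-cohook if and only if Θ admits defining intervals whose middle region has cardinality 0 and for which w_ud(Θ) contains no letter ∧. -/
import Mathlib


open scoped Classical

/-- A β-set: a set of integers containing all sufficiently small integers
and no sufficiently large ones. -/
def IsBetaSet (X : Set ℤ) : Prop :=
  (∃ c : ℤ, ∀ z : ℤ, z < c → z ∈ X) ∧ (∃ C : ℤ, ∀ z : ℤ, C ≤ z → z ∉ X)

/-- `topB X = max X`. -/
noncomputable def topB (X : Set ℤ) : ℤ := sSup X

/-- `botB X = max {z | every integer < z lies in X}`. -/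
noncomputable def botB (X : Set ℤ) : ℤ := sSup {z : ℤ | ∀ w : ℤ, w < z → w ∈ X}

/-- The charge `s(X)` of a β-set `X`, computed with the cutoff `c = botB X`. -/
noncomputable def chargeB (X : Set ℤ) : ℤ :=
  ((X ∩ Set.Ici (botB X)).ncard : ℤ) + botB X - 1

/-- `elemSeq X j` is the `(j+1)`-st largest element of the β-set `X`. -/
noncomputable def elemSeq (X : Set ℤ) : ℕ → ℤ
  | 0 => sSup X
  | n + 1 => sSup (X ∩ Set.Iio (elemSeq X n))

/-- The partition `λ(X)` of a β-set `X`, `0`-indexed: `partB X j = λ_{j+1}`,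
recovered from `x_j = s(X) + λ_j - j + 1` where `x_j` is the `j`-th largest element. -/
noncomputable def partB (X : Set ℤ) (j : ℕ) : ℕ :=
  (elemSeq X j - chargeB X + j).toNat

/-- The size `|λ(X)|` of the partition of a β-set `X`. -/
noncomputable def sizeB (X : Set ℤ) : ℕ := ∑ᶠ j : ℕ, partB X j

/-- A partition, encoded as a weakly decreasing eventually zero function (0-indexed). -/
def IsPartition (μ : ℕ → ℕ) : Prop :=
  (∀ j, μ (j + 1) ≤ μ j) ∧ ∃ N, ∀ j, N ≤ j → μ j = 0

/-- The β-set `{s + λ_j - j + 1 : j ≥ 1}` of the partition `μ` with charge `s`. -/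
def betaOf (μ : ℕ → ℕ) (s : ℤ) : Set ℤ :=
  {x : ℤ | ∃ j : ℕ, x = s + (μ j : ℤ) - (j : ℤ)}

/-- The symbol `Θ = (X₁, X₂)` is `d`-small with defining intervals
`I₁ = [a₁,b₁]` and `I₂ = [a₂,b₂]`. -/
structure IsDSmallWith (d : ℤ) (X₁ X₂ : Set ℤ) (a₁ b₁ a₂ b₂ : ℤ) : Prop where
  len₁ : b₁ - a₁ = d / 2 - 1
  len₂ : b₂ - a₂ = d / 2 - 1
  bot₁ : a₁ ≤ botB X₁
  bot₂ : a₂ ≤ botB X₂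
  top₁ : topB X₁ ≤ b₁
  top₂ : topB X₂ ≤ b₂
  cong : d ∣ b₂ - (b₁ + d / 2)

/-- The symbol `Θ = (X₁, X₂)` is `d`-small: it admits some pair of defining intervals. -/
def IsDSmall (d : ℤ) (X₁ X₂ : Set ℤ) : Prop :=
  ∃ a₁ b₁ a₂ b₂ : ℤ, IsDSmallWith d X₁ X₂ a₁ b₁ a₂ b₂

/-- The row (`1` or `2`) containing the right region. -/
def rightRow (b₁ b₂ : ℤ) : ℕ := if b₁ < b₂ then 2 else 1

/-- The row, as a β-set, containing the right region. -/
def rightSet (X₁ X₂ : Set ℤ) (b₁ b₂ : ℤ) : Set ℤ := if b₁ < b₂ then X₂ else X₁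

/-- The row, as a β-set, containing the left region. -/
def leftSet (X₁ X₂ : Set ℤ) (b₁ b₂ : ℤ) : Set ℤ := if b₁ < b₂ then X₁ else X₂

/-- The cardinality `kd` of the middle region. -/
def middleLen (d b₁ b₂ : ℤ) : ℤ := |b₂ - b₁| - d / 2

/-- The alphabet `{∧, ∨, ×, ∘}` of up-down diagrams: `up = ∧`, `dn = ∨`,
`cross = ×`, `circ = ∘`. -/
inductive UD : Type
  | up
  | dn
  | cross
  | circ
deriving DecidableEq

/-- The up-down diagram `w_ud(Θ)` of a `d`-small symbol with defining intervals:
`wud d X₁ X₂ b₁ b₂ i` is the letter `w_i` for `1 ≤ i ≤ d/2`.  Here the right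
region is `[m+1, m+d/2]` with `m = max b₁ b₂ - d/2`, `β_i = m + i`, and
`β_i - kd - d/2 = β_i - |b₂ - b₁|`. -/
noncomputable def wud (d : ℤ) (X₁ X₂ : Set ℤ) (b₁ b₂ : ℤ) (i : ℤ) : UD :=
  if (max b₁ b₂ - d / 2 + i) ∈ rightSet X₁ X₂ b₁ b₂ then
    if (max b₁ b₂ - d / 2 + i) - |b₂ - b₁| ∈ leftSet X₁ X₂ b₁ b₂ then UD.cross else UD.up
  else
    if (max b₁ b₂ - d / 2 + i) - |b₂ - b₁| ∈ leftSet X₁ X₂ b₁ b₂ then UD.dn else UD.circ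

/-- Removing an `e`-cohook in row `1` (the rows get interchanged afterwards). -/
def RemoveCohookRow1 (e : ℤ) (Θ Θ' : Set ℤ × Set ℤ) : Prop :=
  ∃ x : ℤ, x ∈ Θ.1 ∧ x - e ∉ Θ.2 ∧ Θ' = (Θ.2 ∪ {x - e}, Θ.1 \ {x})

/-- Removing an `e`-cohook in row `2` (the rows get interchanged afterwards). -/
def RemoveCohookRow2 (e : ℤ) (Θ Θ' : Set ℤ × Set ℤ) : Prop :=
  ∃ x : ℤ, x ∈ Θ.2 ∧ x - e ∉ Θ.1 ∧ Θ' = (Θ.2 \ {x}, Θ.1 ∪ {x - e})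

/-- Removing an `e`-cohook. -/
def RemoveCohook (e : ℤ) (Θ Θ' : Set ℤ × Set ℤ) : Prop :=
  RemoveCohookRow1 e Θ Θ' ∨ RemoveCohookRow2 e Θ Θ'

/-- The symbol `Θ` has an `e`-cohook. -/
def HasCohook (e : ℤ) (Θ : Set ℤ × Set ℤ) : Prop :=
  (∃ x : ℤ, x ∈ Θ.1 ∧ x - e ∉ Θ.2) ∨ (∃ x : ℤ, x ∈ Θ.2 ∧ x - e ∉ Θ.1)

/-- `C` is an `e`-cocore of `Θ`: a symbol with no `e`-cohooks obtained from `Θ`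
by a finite sequence of `e`-cohook removals. -/
def IsCocoreOf (e : ℤ) (Θ C : Set ℤ × Set ℤ) : Prop :=
  Relation.ReflTransGen (RemoveCohook e) Θ C ∧ ¬ HasCohook e C

/-- The `n`-fold composition of a relation. -/
def RelPow {α : Type*} (R : α → α → Prop) : ℕ → α → α → Prop
  | 0 => Eq
  | n + 1 => fun a c => ∃ b, R a b ∧ RelPow R n b c

/-- `(a, b)` (row `a`, column `b`, both `1`-indexed) is a box of the partition `μ`
(`μ` is `0`-indexed, so `μ (a-1)` is the `a`-th part `λ_a`). -/
def IsBox (μ : ℕ → ℕ) (a b : ℕ) : Prop := 1 ≤ a ∧ 1 ≤ b ∧ b ≤ μ (a - 1)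

/-- `(a, b)` is an addable box of `μ`: adjoining it yields a partition. -/
def IsAddableBox (μ : ℕ → ℕ) (a b : ℕ) : Prop :=
  1 ≤ a ∧ b = μ (a - 1) + 1 ∧ (a = 1 ∨ b ≤ μ (a - 2))

/-- `(a, b)` is a removable box of `μ`: deleting it yields a partition. -/
def IsRemovableBox (μ : ℕ → ℕ) (a b : ℕ) : Prop :=
  1 ≤ a ∧ b = μ (a - 1) ∧ 1 ≤ b ∧ μ a < b

/-- The charged content `t + b - a` of the box in row `a` and column `b`,
with respect to the charge `t`. -/
def chCont (t : ℤ) (a b : ℕ) : ℤ := t + (b : ℤ) - (a : ℤ)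

/-- Selecting the component `j ∈ {1, 2}` of a bipartition. -/
def compPart (μ₁ μ₂ : ℕ → ℕ) (j : ℕ) : ℕ → ℕ := if j = 1 then μ₁ else μ₂

/-- Selecting the component `j ∈ {1, 2}` of a pair of charges. -/
def compT (t₁ t₂ : ℤ) (j : ℕ) : ℤ := if j = 1 then t₁ else t₂

/-- The box `(a, b)` in component `j` is a good removable `i`-box of the
bipartition `(μ₁, μ₂)` with charges `(t₁, t₂)`, where `r` is the row containing
the right region: it is a removable box of charged content `≡ i (mod d)` and
there is no addable box `A` of either component with charged content `≡ i (mod d)`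
such that either `A` has strictly larger charged content, or `A` has equal
charged content and lies in component `r`. -/
def IsGoodRemovableBox (d : ℤ) (μ₁ μ₂ : ℕ → ℕ) (t₁ t₂ : ℤ) (r : ℕ) (i : ℤ)
    (j a b : ℕ) : Prop :=
  (j = 1 ∨ j = 2) ∧ IsRemovableBox (compPart μ₁ μ₂ j) a b ∧
    d ∣ chCont (compT t₁ t₂ j) a b - i ∧
    ∀ j' a' b' : ℕ, (j' = 1 ∨ j' = 2) → IsAddableBox (compPart μ₁ μ₂ j') a' b' →
      d ∣ chCont (compT t₁ t₂ j') a' b' - i →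
      ¬ (chCont (compT t₁ t₂ j) a b < chCont (compT t₁ t₂ j') a' b' ∨
        (chCont (compT t₁ t₂ j') a' b' = chCont (compT t₁ t₂ j) a b ∧ j' = r))

/-- The position of a letter in the order `× < ∧ < ∨ < ∘`. -/
def udIdx : UD → ℕ
  | UD.cross => 0
  | UD.up => 1
  | UD.dn => 2
  | UD.circ => 3

/-- The word `w₁ ⋯ w_{d/2}` reads `×^α ∧^w ∨^h ∘^β`: all `×`'s first, then all
`∧`'s, then all `∨`'s, then all `∘`'s. -/
def SortedUD (d : ℤ) (w : ℤ → UD) : Prop :=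
  ∀ i j : ℤ, 1 ≤ i → i ≤ j → j ≤ d / 2 → udIdx (w i) ≤ udIdx (w j)

/-- The number of occurrences of the letter `u` in the word `w₁ ⋯ w_{d/2}`. -/
noncomputable def countUD (d : ℤ) (w : ℤ → UD) (u : UD) : ℕ :=
  ((Finset.Icc (1 : ℤ) (d / 2)).filter fun i => w i = u).card

/-- `w'` is obtained from `w` by permuting the letters `∧` and `∨` among the
positions carrying `∧` or `∨`, leaving every `×` and `∘` in place. -/
def PermUpDn (d : ℤ) (w w' : ℤ → UD) : Prop :=
  (∀ i : ℤ, 1 ≤ i → i ≤ d / 2 →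
    ((w' i = UD.cross ↔ w i = UD.cross) ∧ (w' i = UD.circ ↔ w i = UD.circ))) ∧
  countUD d w' UD.up = countUD d w UD.up

/-- Replace every letter `∧` by `∨`, leaving the other letters unchanged. -/
def replaceUp : UD → UD
  | UD.up => UD.dn
  | u => u

lemma betaNonempty {X : Set ℤ} (hX : IsBetaSet X) : X.Nonempty := by
  obtain ⟨c, hc⟩ := hX.1
  exact ⟨c - 1, hc _ (by omega)⟩

lemma betaBddAbove {X : Set ℤ} (hX : IsBetaSet X) : BddAbove X := by
  obtain ⟨C, hC⟩ := hX.2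
  refine ⟨C, fun z hz => ?_⟩
  by_contra h
  exact hC z (by omega) hz

lemma le_topB {X : Set ℤ} (hX : IsBetaSet X) {x : ℤ} (hx : x ∈ X) : x ≤ topB X :=
  le_csSup (betaBddAbove hX) hx

lemma topB_mem {X : Set ℤ} (hX : IsBetaSet X) : topB X ∈ X :=
  Int.csSup_mem (betaNonempty hX) (betaBddAbove hX)

lemma lt_botB_mem {X : Set ℤ} (hX : IsBetaSet X) {w : ℤ} (hw : w < botB X) : w ∈ X := by
  have hne : ({z : ℤ | ∀ w : ℤ, w < z → w ∈ X}).Nonempty := by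
    obtain ⟨c, hc⟩ := hX.1
    exact ⟨c, fun w hw => hc w hw⟩
  have hbdd : BddAbove {z : ℤ | ∀ w : ℤ, w < z → w ∈ X} := by
    obtain ⟨C, hC⟩ := hX.2
    refine ⟨C, fun z hz => ?_⟩
    by_contra h
    exact hC C le_rfl (hz C (by omega))
  have hmem := Int.csSup_mem hne hbdd
  exact hmem w hw

/-- A `d`-small symbol `Θ` has no `d/2`-cohook if and only if it
admits defining intervals whose middle region has cardinality `0` and for which
`w_ud(Θ)` contains no letter `∧`. -/
theorem stmt12 (d : ℤ) (hd : 2 ≤ d) (hdE : Even d)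
    (X₁ X₂ : Set ℤ) (hX₁ : IsBetaSet X₁) (hX₂ : IsBetaSet X₂)
    (hsm : IsDSmall d X₁ X₂) :
    ¬ HasCohook (d / 2) (X₁, X₂) ↔
      ∃ a₁ b₁ a₂ b₂ : ℤ, IsDSmallWith d X₁ X₂ a₁ b₁ a₂ b₂ ∧
        middleLen d b₁ b₂ = 0 ∧
        ∀ i : ℤ, 1 ≤ i → i ≤ d / 2 → wud d X₁ X₂ b₁ b₂ i ≠ UD.up := by
  obtain ⟨e, he⟩ := hdE
  have hde : d / 2 = e := by omega
  have he1 : 1 ≤ e := by omega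
  rw [hde]
  obtain ⟨a₁', b₁', a₂', b₂', hs'⟩ := hsm
  have hsl1 := hs'.len₁; have hsl2 := hs'.len₂
  have hsb1 := hs'.bot₁; have hsb2 := hs'.bot₂
  have hst1 := hs'.top₁; have hst2 := hs'.top₂
  have ht1 : topB X₁ ≤ botB X₁ + e - 1 := by omega
  have ht2 : topB X₂ ≤ botB X₂ + e - 1 := by omega
  constructor
  · intro hno
    have h1 : ∀ x, x ∈ X₁ → x - e ∈ X₂ := by
      intro x hx; by_contra h
      exact hno (Or.inl ⟨x, hx, h⟩)
    have h2 : ∀ x, x ∈ X₂ → x - e ∈ X₁ := by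
      intro x hx; by_contra h
      exact hno (Or.inr ⟨x, hx, h⟩)
    have hle1 : topB X₁ - e ≤ topB X₂ := le_topB hX₂ (h1 _ (topB_mem hX₁))
    have hle2 : topB X₂ - e ≤ topB X₁ := le_topB hX₁ (h2 _ (topB_mem hX₂))
    have key : topB X₁ < botB X₂ ∨ topB X₂ < botB X₁ := by
      by_contra h
      push_neg at h
      obtain ⟨k1, k2⟩ := h
      have hc := hs'.cong
      rw [hde] at hc
      obtain ⟨k, hk⟩ := hc
      have hlt : b₂' - (b₁' + e) < 0 := by omega
      have hgt : -(2 * e) < b₂' - (b₁' + e) := by omega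
      rw [hk] at hlt hgt
      rcases lt_trichotomy k 0 with hk0 | hk0 | hk0
      · have h1' : k ≤ -1 := by omega
        have h2' : d * k ≤ d * (-1) :=
          mul_le_mul_of_nonneg_left h1' (by omega)
        have : d * (-1) = -d := by ring
        omega
      · subst hk0
        simp at hk
        omega
      · have h1' : (1 : ℤ) ≤ k := hk0
        have h2' : d * 1 ≤ d * k :=
          mul_le_mul_of_nonneg_left h1' (by omega)
        have : d * 1 = d := by ring
        omega
    rcases key with hcase | hcase
    · refine ⟨topB X₁ - e + 1, topB X₁, topB X₁ + 1, topB X₁ + e,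
        ⟨by omega, by omega, by omega, by omega, le_rfl, by omega, ?_⟩, ?_, ?_⟩
      · rw [show topB X₁ + e - (topB X₁ + d / 2) = 0 from by omega]
        exact dvd_zero d
      · unfold middleLen
        rw [show topB X₁ + e - topB X₁ = e from by ring,
          abs_of_nonneg (show (0 : ℤ) ≤ e from by omega)]
        omega
      · intro i hi1 hi2
        have hlt : topB X₁ < topB X₁ + e := by omega
        have hmax : max (topB X₁) (topB X₁ + e) = topB X₁ + e := max_eq_right (by omega)
        have hrs : rightSet X₁ X₂ (topB X₁) (topB X₁ + e) = X₂ := if_pos hlt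
        have hls : leftSet X₁ X₂ (topB X₁) (topB X₁ + e) = X₁ := if_pos hlt
        have habs : |topB X₁ + e - topB X₁| = e := by
          rw [show topB X₁ + e - topB X₁ = e from by ring]
          exact abs_of_nonneg (by omega)
        simp only [wud, hrs, hls, hmax, habs, hde]
        split_ifs with hA hB hC
        · decide
        · exact absurd (h2 _ hA) hB
        · decide
        · decide
    · refine ⟨topB X₂ + 1, topB X₂ + e, topB X₂ - e + 1, topB X₂,
        ⟨by omega, by omega, by omega, by omega, by omega, le_rfl, ?_⟩, ?_, ?_⟩
      · rw [show topB X₂ - (topB X₂ + e + d / 2) = -d from by omega]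
        exact dvd_neg.mpr dvd_rfl
      · unfold middleLen
        rw [show topB X₂ - (topB X₂ + e) = -e from by ring, abs_neg,
          abs_of_nonneg (show (0 : ℤ) ≤ e from by omega)]
        omega
      · intro i hi1 hi2
        have hnlt : ¬ (topB X₂ + e < topB X₂) := by omega
        have hmax : max (topB X₂ + e) (topB X₂) = topB X₂ + e := max_eq_left (by omega)
        have hrs : rightSet X₁ X₂ (topB X₂ + e) (topB X₂) = X₁ := if_neg hnlt
        have hls : leftSet X₁ X₂ (topB X₂ + e) (topB X₂) = X₂ := if_neg hnlt
        have habs : |topB X₂ - (topB X₂ + e)| = e := by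
          rw [show topB X₂ - (topB X₂ + e) = -e from by ring, abs_neg]
          exact abs_of_nonneg (by omega)
        simp only [wud, hrs, hls, hmax, habs, hde]
        split_ifs with hA hB hC
        · decide
        · exact absurd (h1 _ hA) hB
        · decide
        · decide
  · rintro ⟨a₁, b₁, a₂, b₂, hs, hmid, hup⟩ hcoh
    have hl1 := hs.len₁; have hl2 := hs.len₂
    have hb1 := hs.bot₁; have hb2 := hs.bot₂
    have htt1 := hs.top₁; have htt2 := hs.top₂
    unfold middleLen at hmid
    have habs : |b₂ - b₁| = e := by linarith
    rcases (abs_eq (show (0 : ℤ) ≤ e from by omega)).mp habs with hbe | hbe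
    · -- b₂ = b₁ + e : row 2 is the right region
      obtain ⟨x, hx, hxe⟩ | ⟨x, hx, hxe⟩ := hcoh
      · -- x ∈ X₁ (left row)
        have hxt : x ≤ topB X₁ := le_topB hX₁ hx
        exact hxe (lt_botB_mem hX₂ (by omega))
      · -- x ∈ X₂ (right row)
        have hxt : x ≤ topB X₂ := le_topB hX₂ hx
        rcases le_or_gt x b₁ with hxb | hxb
        · exact hxe (lt_botB_mem hX₁ (by omega))
        · refine hup (x - b₁) (by omega) (by omega) ?_
          have hlt : b₁ < b₂ := by omega
          have hrs : rightSet X₁ X₂ b₁ b₂ = X₂ := if_pos hlt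
          have hls : leftSet X₁ X₂ b₁ b₂ = X₁ := if_pos hlt
          have hmax : max b₁ b₂ = b₂ := max_eq_right (by omega)
          have hβ : max b₁ b₂ - d / 2 + (x - b₁) = x := by rw [hmax]; omega
          simp only [wud, hrs, hls, hβ, habs]
          rw [if_pos hx, if_neg hxe]
    · -- b₂ = b₁ - e : row 1 is the right region
      obtain ⟨x, hx, hxe⟩ | ⟨x, hx, hxe⟩ := hcoh
      · -- x ∈ X₁ (right row)
        have hxt : x ≤ topB X₁ := le_topB hX₁ hx
        rcases le_or_gt x b₂ with hxb | hxb
        · exact hxe (lt_botB_mem hX₂ (by omega))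
        · refine hup (x - b₂) (by omega) (by omega) ?_
          have hnlt : ¬ (b₁ < b₂) := by omega
          have hrs : rightSet X₁ X₂ b₁ b₂ = X₁ := if_neg hnlt
          have hls : leftSet X₁ X₂ b₁ b₂ = X₂ := if_neg hnlt
          have hmax : max b₁ b₂ = b₁ := max_eq_left (by omega)
          have hβ : max b₁ b₂ - d / 2 + (x - b₂) = x := by rw [hmax]; omega
          simp only [wud, hrs, hls, hβ, habs]
          rw [if_pos hx, if_neg hxe]
      · -- x ∈ X₂ (left row)
        have hxt : x ≤ topB X₂ := le_topB hX₂ hx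
        exact hxe (lt_botB_mem hX₁ (by omega))
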